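/- Let M = M(x) be the free magma on one generator, Γ = M \ (xM ∪ {x}), and Ω = Γ \ (Γ·Γ) the free generating set of Γ. Let Ω_n be the degree-n part of Ω. Then Ω_1 = Ω_2 = ∅, Ω_3 = {x²·x}, and for n ≥ 4, |Ω_n| = 3(c_{n−1} − c_{n−2}), where c_m = (2(m−1))!/(m!(m−1)!). -/

import Mathlib

noncomputable section

namespace Stmt9

/-- The single generator `x` of the free magma `M(x)`. -/
def x1 : FreeMagma Unit := FreeMagma.of ()

/-- `Γ = M \ (xM ∪ {x})`. -/
def Gam : Set (FreeMagma Unit) := {t | t ≠ x1 ∧ ∀ s, t ≠ x1 * s}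

/-- `Ω = Γ \ Γ·Γ`, the free generating set of `Γ`. -/
def Om : Set (FreeMagma Unit) :=
  Gam \ {t | ∃ s ∈ Gam, ∃ u ∈ Gam, t = s * u}

/-- The degree-`n` part of `Ω`. -/
def OmDeg (n : ℕ) : Set (FreeMagma Unit) := {t | t ∈ Om ∧ t.length = n}

/-- The Catalan-type numbers `c_m = (2(m−1))!/(m!(m−1)!)`. -/
def catalanC (m : ℕ) : ℕ := (2 * (m - 1)).factorial / (m.factorial * (m - 1).factorial)

open Finset
open scoped Classical

/-! ### Basic structural lemmas about `FreeMagma Unit` -/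

lemma of_ne_mul (a : Unit) (u v : FreeMagma Unit) : FreeMagma.of a ≠ u * v := by
  rw [← FreeMagma.mul_eq]; exact fun h => by cases h

lemma mul_ne_of (a : Unit) (u v : FreeMagma Unit) : u * v ≠ FreeMagma.of a :=
  fun h => of_ne_mul a u v h.symm

lemma mul_inj {a b c d : FreeMagma Unit} (h : a * b = c * d) : a = c ∧ b = d := by
  rw [← FreeMagma.mul_eq, ← FreeMagma.mul_eq] at h
  exact ⟨congrArg (fun t => match t with | FreeMagma.mul u _ => u | t => t) h,
    congrArg (fun t => match t with | FreeMagma.mul _ v => v | t => t) h⟩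

lemma x1_ne_mul (u v : FreeMagma Unit) : x1 ≠ u * v := of_ne_mul () u v

@[simp] lemma length_x1 : x1.length = 1 := rfl

@[simp] lemma length_mul (u v : FreeMagma Unit) : (u * v).length = u.length + v.length := rfl

lemma eq_x1_of_length_one {t : FreeMagma Unit} (h : t.length = 1) : t = x1 := by
  cases t with
  | of a => cases a; rfl
  | mul u v =>
    simp only [FreeMagma.length] at h
    have := u.length_pos; have := v.length_pos; omega

lemma exists_mul_of_two_le_length {t : FreeMagma Unit} (h : 2 ≤ t.length) :
    ∃ u v, t = u * v := by
  cases t with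
  | of a => simp [FreeMagma.length] at h
  | mul u v => exact ⟨u, v, rfl⟩

lemma eq_sq_of_length_two {t : FreeMagma Unit} (h : t.length = 2) : t = x1 * x1 := by
  obtain ⟨u, v, rfl⟩ := exists_mul_of_two_le_length h.ge
  rw [length_mul] at h
  have := u.length_pos; have := v.length_pos
  have hu : u = x1 := eq_x1_of_length_one (by omega)
  have hv : v = x1 := eq_x1_of_length_one (by omega)
  rw [hu, hv]

/-! ### The equivalence with planar binary trees -/

def ofTree : BinaryTree Unit → FreeMagma Unit
  | BinaryTree.nil => x1
  | BinaryTree.node _ a b => ofTree a * ofTree b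

def toTree : FreeMagma Unit → BinaryTree Unit
  | FreeMagma.of _ => BinaryTree.nil
  | FreeMagma.mul a b => BinaryTree.node () (toTree a) (toTree b)

@[simp] lemma toTree_mul (u v : FreeMagma Unit) :
    toTree (u * v) = BinaryTree.node () (toTree u) (toTree v) := rfl

lemma toTree_ofTree : ∀ t, toTree (ofTree t) = t
  | BinaryTree.nil => rfl
  | BinaryTree.node _ a b => by
    simp only [ofTree, toTree_mul, toTree_ofTree a, toTree_ofTree b]

lemma ofTree_toTree : ∀ t, ofTree (toTree t) = t
  | FreeMagma.of a => by cases a; rfl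
  | FreeMagma.mul a b => by
    show ofTree (BinaryTree.node () (toTree a) (toTree b)) = _
    rw [ofTree, ofTree_toTree a, ofTree_toTree b, FreeMagma.mul_eq]

lemma length_ofTree : ∀ t : BinaryTree Unit, (ofTree t).length = t.numNodes + 1
  | BinaryTree.nil => rfl
  | BinaryTree.node _ a b => by
    rw [ofTree, length_mul, length_ofTree a, length_ofTree b]
    simp [BinaryTree.numNodes]; omega

lemma ofTree_injective : Function.Injective ofTree :=
  Function.LeftInverse.injective toTree_ofTree

/-- Finset of all elements of length `m` (for `m ≥ 1`). -/
def F (m : ℕ) : Finset (FreeMagma Unit) := (BinaryTree.treesOfNumNodesEq (m - 1)).image ofTree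

lemma mem_F {m : ℕ} (hm : 1 ≤ m) {t : FreeMagma Unit} : t ∈ F m ↔ t.length = m := by
  simp only [F, mem_image, BinaryTree.mem_treesOfNumNodesEq]
  constructor
  · rintro ⟨a, ha, rfl⟩
    rw [length_ofTree, ha]; omega
  · intro h
    refine ⟨toTree t, ?_, ofTree_toTree t⟩
    have := length_ofTree (toTree t)
    rw [ofTree_toTree t] at this
    omega

lemma card_F (m : ℕ) : (F m).card = catalan (m - 1) := by
  rw [F, card_image_of_injective _ ofTree_injective,
    BinaryTree.treesOfNumNodesEq_card_eq_catalan]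

lemma catalanC_succ (k : ℕ) : catalanC (k + 1) = catalan k := by
  rw [catalan_eq_centralBinom_div, Nat.centralBinom,
    Nat.choose_eq_factorial_div_factorial (by omega : k ≤ 2 * k),
    Nat.div_div_eq_div_mul]
  unfold catalanC
  simp only [Nat.add_sub_cancel]
  congr 1
  rw [Nat.factorial_succ]
  have : 2 * k - k = k := by omega
  rw [this]; ring

/-! ### Characterizations of `Γ` and `Ω` -/

lemma mem_Gam {t : FreeMagma Unit} : t ∈ Gam ↔ ∃ u v, u ≠ x1 ∧ t = u * v := by
  constructor
  · rintro ⟨h1, h2⟩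
    cases t with
    | of a => cases a; exact absurd rfl h1
    | mul u v =>
      rw [FreeMagma.mul_eq]
      refine ⟨u, v, ?_, rfl⟩
      rintro rfl
      exact h2 v rfl
  · rintro ⟨u, v, hu, rfl⟩
    refine ⟨mul_ne_of () u v, fun s h => ?_⟩
    exact hu (mul_inj h).1

lemma not_mem_Gam {t : FreeMagma Unit} :
    t ∉ Gam ↔ t = x1 ∨ ∃ s, t = x1 * s := by
  rw [Gam]
  simp only [Set.mem_setOf_eq, not_and, not_forall, not_not, ne_eq]
  constructor
  · intro h
    by_cases ht : t = x1
    · exact Or.inl ht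
    · obtain ⟨s, hs⟩ := h ht
      exact Or.inr ⟨s, hs⟩
  · rintro (rfl | ⟨s, rfl⟩)
    · exact fun h => absurd rfl h
    · exact fun _ => ⟨s, rfl⟩

lemma mem_Om {t : FreeMagma Unit} :
    t ∈ Om ↔ ∃ u v, t = u * v ∧ u ≠ x1 ∧
      ((∃ s, u = x1 * s) ∨ v = x1 ∨ ∃ s, v = x1 * s) := by
  rw [Om]
  constructor
  · rintro ⟨hG, hP⟩
    obtain ⟨u, v, hu, rfl⟩ := mem_Gam.mp hG
    refine ⟨u, v, rfl, hu, ?_⟩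
    simp only [Set.mem_setOf_eq] at hP
    by_cases huG : u ∈ Gam
    · by_cases hvG : v ∈ Gam
      · exact absurd ⟨u, huG, v, hvG, rfl⟩ hP
      · rcases not_mem_Gam.mp hvG with h | ⟨s, hs⟩
        · exact Or.inr (Or.inl h)
        · exact Or.inr (Or.inr ⟨s, hs⟩)
    · rcases not_mem_Gam.mp huG with h | ⟨s, hs⟩
      · exact absurd h hu
      · exact Or.inl ⟨s, hs⟩
  · rintro ⟨u, v, rfl, hu, hcond⟩
    constructor
    · exact mem_Gam.mpr ⟨u, v, hu, rfl⟩
    · simp only [Set.mem_setOf_eq, not_exists]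
      rintro s ⟨hsG, w, hwG, h⟩
      obtain ⟨rfl, rfl⟩ := mul_inj h
      rcases hcond with ⟨s', hs'⟩ | h | ⟨s', hs'⟩
      · exact hsG.2 s' hs'
      · exact hwG.1 h
      · exact hwG.2 s' hs'

/-! ### The small cases -/

lemma OmDeg_one : OmDeg 1 = ∅ := by
  ext t
  simp only [OmDeg, Set.mem_setOf_eq, Set.mem_empty_iff_false, iff_false, not_and]
  intro hOm
  obtain ⟨u, v, rfl, -, -⟩ := mem_Om.mp hOm
  rw [length_mul]
  have := u.length_pos; have := v.length_pos
  omega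

lemma OmDeg_two : OmDeg 2 = ∅ := by
  ext t
  simp only [OmDeg, Set.mem_setOf_eq, Set.mem_empty_iff_false, iff_false, not_and]
  intro hOm
  obtain ⟨u, v, rfl, hu, -⟩ := mem_Om.mp hOm
  rw [length_mul]
  intro h
  have := u.length_pos; have := v.length_pos
  exact hu (eq_x1_of_length_one (by omega))

lemma OmDeg_three : OmDeg 3 = {(x1 * x1) * x1} := by
  ext t
  simp only [OmDeg, Set.mem_setOf_eq, Set.mem_singleton_iff]
  constructor
  · rintro ⟨hOm, hlen⟩
    obtain ⟨u, v, rfl, hu, -⟩ := mem_Om.mp hOm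
    rw [length_mul] at hlen
    have := u.length_pos; have := v.length_pos
    have hune : u.length ≠ 1 := fun h => hu (eq_x1_of_length_one h)
    have hu2 : u.length = 2 := by omega
    have hv1 : v.length = 1 := by omega
    rw [eq_sq_of_length_two hu2, eq_x1_of_length_one hv1]
  · rintro rfl
    refine ⟨mem_Om.mpr ⟨x1 * x1, x1, rfl, mul_ne_of () x1 x1, Or.inl ⟨x1, rfl⟩⟩, ?_⟩
    simp

/-! ### The main count -/

def P1 (n : ℕ) : Finset (FreeMagma Unit) :=
  (F n).filter (fun t => ∃ s v, t = (x1 * s) * v)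

def P2 (n : ℕ) : Finset (FreeMagma Unit) :=
  (F n).filter (fun t => ∃ u, u ≠ x1 ∧ t = u * x1)

def P3 (n : ℕ) : Finset (FreeMagma Unit) :=
  (F n).filter (fun t => ∃ u s, u ≠ x1 ∧ t = u * (x1 * s))

def G (m : ℕ) : Finset (FreeMagma Unit) := (F m).filter (· ∈ Gam)

def unL : FreeMagma Unit → FreeMagma Unit
  | FreeMagma.mul u _ => u
  | t => t

def unR : FreeMagma Unit → FreeMagma Unit
  | FreeMagma.mul _ v => v
  | t => t

@[simp] lemma unL_mul (u v : FreeMagma Unit) : unL (u * v) = u := rfl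
@[simp] lemma unR_mul (u v : FreeMagma Unit) : unR (u * v) = v := rfl

lemma OmFilter_eq (n : ℕ) :
    (F n).filter (· ∈ Om) = P1 n ∪ P2 n ∪ P3 n := by
  ext t
  simp only [P1, P2, P3, mem_union, mem_filter]
  constructor
  · rintro ⟨hF, hOm⟩
    obtain ⟨u, v, rfl, hu, hcond⟩ := mem_Om.mp hOm
    rcases hcond with ⟨s, rfl⟩ | rfl | ⟨s, rfl⟩
    · exact Or.inl (Or.inl ⟨hF, s, v, rfl⟩)
    · exact Or.inl (Or.inr ⟨hF, u, hu, rfl⟩)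
    · exact Or.inr ⟨hF, u, s, hu, rfl⟩
  · rintro ((⟨hF, s, v, rfl⟩ | ⟨hF, u, hu, rfl⟩) | ⟨hF, u, s, hu, rfl⟩)
    · exact ⟨hF, mem_Om.mpr ⟨x1 * s, v, rfl, mul_ne_of () x1 s, Or.inl ⟨s, rfl⟩⟩⟩
    · exact ⟨hF, mem_Om.mpr ⟨u, x1, rfl, hu, Or.inr (Or.inl rfl)⟩⟩
    · exact ⟨hF, mem_Om.mpr ⟨u, x1 * s, rfl, hu, Or.inr (Or.inr ⟨s, rfl⟩)⟩⟩

lemma card_P1 (m : ℕ) (hm : 2 ≤ m) : (P1 (m + 1)).card = (F m).card := by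
  apply card_nbij' (i := fun t => unR (unL t) * unR t)
    (j := fun w => (x1 * unL w) * unR w)
  all_goals simp only [Set.MapsTo, Set.LeftInvOn, Set.RightInvOn, Finset.mem_coe]
  · rintro t ht
    rw [P1, mem_filter] at ht
    obtain ⟨hF, s, v, rfl⟩ := ht
    rw [mem_F (by omega)] at hF
    simp only [unL_mul, unR_mul]
    rw [mem_F (by omega)]
    simp only [length_mul, length_x1] at hF ⊢
    omega
  · rintro w hw
    rw [mem_F (by omega)] at hw
    obtain ⟨a, b, rfl⟩ := exists_mul_of_two_le_length (t := w) (by omega)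
    simp only [unL_mul, unR_mul]
    rw [P1, mem_filter, mem_F (by omega)]
    refine ⟨?_, a, b, rfl⟩
    simp only [length_mul, length_x1] at hw ⊢
    omega
  · rintro t ht
    rw [P1, mem_filter] at ht
    obtain ⟨-, s, v, rfl⟩ := ht
    simp only [unL_mul, unR_mul]
  · rintro w hw
    rw [mem_F (by omega)] at hw
    obtain ⟨a, b, rfl⟩ := exists_mul_of_two_le_length (t := w) (by omega)
    simp only [unL_mul, unR_mul]

lemma card_P2 (m : ℕ) (hm : 2 ≤ m) : (P2 (m + 1)).card = (F m).card := by
  apply card_nbij' (i := unL) (j := fun u => u * x1)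
  all_goals simp only [Set.MapsTo, Set.LeftInvOn, Set.RightInvOn, Finset.mem_coe]
  · rintro t ht
    rw [P2, mem_filter] at ht
    obtain ⟨hF, u, hu, rfl⟩ := ht
    rw [mem_F (by omega)] at hF
    simp only [unL_mul]
    rw [mem_F (by omega)]
    simp only [length_mul, length_x1] at hF
    omega
  · rintro u hu
    rw [mem_F (by omega)] at hu
    rw [P2, mem_filter, mem_F (by omega)]
    refine ⟨?_, u, ?_, rfl⟩
    · simp only [length_mul, length_x1]; omega
    · rintro rfl; rw [length_x1] at hu; omega
  · rintro t ht
    rw [P2, mem_filter] at ht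
    obtain ⟨-, u, hu, rfl⟩ := ht
    simp only [unL_mul]
  · rintro u hu
    simp only [unL_mul]

lemma card_P3 (m : ℕ) (hm : 2 ≤ m) : (P3 (m + 1)).card = (G m).card := by
  apply card_nbij' (i := fun t => unL t * unR (unR t))
    (j := fun w => unL w * (x1 * unR w))
  all_goals simp only [Set.MapsTo, Set.LeftInvOn, Set.RightInvOn, Finset.mem_coe]
  · rintro t ht
    rw [P3, mem_filter] at ht
    obtain ⟨hF, u, s, hu, rfl⟩ := ht
    rw [mem_F (by omega)] at hF
    simp only [unL_mul, unR_mul]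
    rw [G, mem_filter, mem_F (by omega)]
    refine ⟨?_, mem_Gam.mpr ⟨u, s, hu, rfl⟩⟩
    simp only [length_mul, length_x1] at hF ⊢
    omega
  · rintro w hw
    rw [G, mem_filter, mem_F (by omega)] at hw
    obtain ⟨hlen, hG⟩ := hw
    obtain ⟨u, s, hu, rfl⟩ := mem_Gam.mp hG
    simp only [unL_mul, unR_mul]
    rw [P3, mem_filter, mem_F (by omega)]
    refine ⟨?_, u, s, hu, rfl⟩
    simp only [length_mul, length_x1] at hlen ⊢
    omega
  · rintro t ht
    rw [P3, mem_filter] at ht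
    obtain ⟨-, u, s, hu, rfl⟩ := ht
    simp only [unL_mul, unR_mul]
  · rintro w hw
    rw [G, mem_filter] at hw
    obtain ⟨u, s, hu, rfl⟩ := mem_Gam.mp hw.2
    simp only [unL_mul, unR_mul]

lemma card_G (m : ℕ) (hm : 2 ≤ m) : (G m).card + (F (m - 1)).card = (F m).card := by
  have hnot : ((F m).filter (fun t => ¬ t ∈ Gam)).card = (F (m - 1)).card := by
    apply card_nbij' (i := unR) (j := fun s => x1 * s)
    all_goals simp only [Set.MapsTo, Set.LeftInvOn, Set.RightInvOn, Finset.mem_coe]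
    · rintro t ht
      rw [mem_filter, mem_F (by omega)] at ht
      obtain ⟨hlen, hG⟩ := ht
      rcases not_mem_Gam.mp hG with rfl | ⟨s, rfl⟩
      · rw [length_x1] at hlen; omega
      · simp only [unR_mul]
        rw [mem_F (by omega)]
        simp only [length_mul, length_x1] at hlen
        omega
    · rintro s hs
      rw [mem_F (by omega)] at hs
      rw [mem_filter, mem_F (by omega)]
      refine ⟨?_, not_mem_Gam.mpr (Or.inr ⟨s, rfl⟩)⟩
      simp only [length_mul, length_x1]; omega
    · rintro t ht
      rw [mem_filter, mem_F (by omega)] at ht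
      obtain ⟨hlen, hG⟩ := ht
      rcases not_mem_Gam.mp hG with rfl | ⟨s, rfl⟩
      · rw [length_x1] at hlen; omega
      · simp only [unR_mul]
    · rintro s hs
      simp only [unR_mul]
  rw [← hnot, G, card_filter_add_card_filter_not]

lemma card_P1_inter_P2 (m : ℕ) (hm : 2 ≤ m) :
    (P1 (m + 2) ∩ P2 (m + 2)).card = (F m).card := by
  apply card_nbij' (i := fun t => unR (unL t)) (j := fun s => (x1 * s) * x1)
  all_goals simp only [Set.MapsTo, Set.LeftInvOn, Set.RightInvOn, Finset.mem_coe]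
  · rintro t ht
    rw [mem_inter, P1, P2, mem_filter, mem_filter] at ht
    obtain ⟨⟨hF, s, v, rfl⟩, -, u, hu, heq⟩ := ht
    obtain ⟨rfl, rfl⟩ := mul_inj heq
    rw [mem_F (by omega)] at hF
    simp only [unL_mul, unR_mul]
    rw [mem_F (by omega)]
    simp only [length_mul, length_x1] at hF ⊢
    omega
  · rintro s hs
    rw [mem_F (by omega)] at hs
    rw [mem_inter, P1, P2, mem_filter, mem_filter]
    have hlen : ((x1 * s) * x1).length = m + 2 := by
      simp only [length_mul, length_x1]; omega
    refine ⟨⟨(mem_F (by omega)).mpr hlen, s, x1, rfl⟩,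
      (mem_F (by omega)).mpr hlen, x1 * s, mul_ne_of () x1 s, rfl⟩
  · rintro t ht
    rw [mem_inter, P1, P2, mem_filter, mem_filter] at ht
    obtain ⟨⟨-, s, v, rfl⟩, -, u, hu, heq⟩ := ht
    obtain ⟨rfl, rfl⟩ := mul_inj heq
    simp only [unL_mul, unR_mul]
  · rintro s hs
    simp only [unL_mul, unR_mul]

lemma card_P1_inter_P3 (m : ℕ) (hm : 2 ≤ m) :
    (P1 (m + 2) ∩ P3 (m + 2)).card = (F m).card := by
  apply card_nbij' (i := fun t => unR (unL t) * unR (unR t))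
    (j := fun w => (x1 * unL w) * (x1 * unR w))
  all_goals simp only [Set.MapsTo, Set.LeftInvOn, Set.RightInvOn, Finset.mem_coe]
  · rintro t ht
    rw [mem_inter, P1, P3, mem_filter, mem_filter] at ht
    obtain ⟨⟨hF, a, v, rfl⟩, -, u, s, hu, heq⟩ := ht
    obtain ⟨rfl, rfl⟩ := mul_inj heq
    rw [mem_F (by omega)] at hF
    simp only [unL_mul, unR_mul]
    rw [mem_F (by omega)]
    simp only [length_mul, length_x1] at hF ⊢
    omega
  · rintro w hw
    rw [mem_F (by omega)] at hw
    obtain ⟨a, b, rfl⟩ := exists_mul_of_two_le_length (t := w) (by omega)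
    simp only [unL_mul, unR_mul]
    rw [mem_inter, P1, P3, mem_filter, mem_filter]
    have hlen : ((x1 * a) * (x1 * b)).length = m + 2 := by
      simp only [length_mul, length_x1] at hw ⊢; omega
    refine ⟨⟨(mem_F (by omega)).mpr hlen, a, x1 * b, rfl⟩,
      (mem_F (by omega)).mpr hlen, x1 * a, b, mul_ne_of () x1 a, rfl⟩
  · rintro t ht
    rw [mem_inter, P1, P3, mem_filter, mem_filter] at ht
    obtain ⟨⟨-, a, v, rfl⟩, -, u, s, hu, heq⟩ := ht
    obtain ⟨rfl, rfl⟩ := mul_inj heq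
    simp only [unL_mul, unR_mul]
  · rintro w hw
    rw [mem_F (by omega)] at hw
    obtain ⟨a, b, rfl⟩ := exists_mul_of_two_le_length (t := w) (by omega)
    simp only [unL_mul, unR_mul]

lemma P2_disjoint_P3 (n : ℕ) : Disjoint (P2 n) (P3 n) := by
  rw [disjoint_left]
  rintro t ht2 ht3
  rw [P2, mem_filter] at ht2
  rw [P3, mem_filter] at ht3
  obtain ⟨-, u, hu, rfl⟩ := ht2
  obtain ⟨-, u', s, hu', heq⟩ := ht3
  obtain ⟨rfl, h⟩ := mul_inj heq
  exact x1_ne_mul x1 s h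

/-- `Ω_1 = Ω_2 = ∅`, `Ω_3 = {x²·x}`, and for `n ≥ 4`,
`|Ω_n| = 3(c_{n−1} − c_{n−2})`. -/
theorem card_Omega_deg :
    OmDeg 1 = ∅ ∧ OmDeg 2 = ∅ ∧ OmDeg 3 = {(x1 * x1) * x1} ∧
    ∀ n : ℕ, 4 ≤ n → (OmDeg n).ncard = 3 * (catalanC (n - 1) - catalanC (n - 2)) := by
  refine ⟨OmDeg_one, OmDeg_two, OmDeg_three, ?_⟩
  intro n hn
  obtain ⟨m, rfl⟩ : ∃ m, n = m + 4 := ⟨n - 4, by omega⟩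
  have hdeg : OmDeg (m + 4) = ↑((F (m + 4)).filter (· ∈ Om)) := by
    ext t
    simp only [OmDeg, Set.mem_setOf_eq, coe_filter, mem_F (by omega : 1 ≤ m + 4)]
    tauto
  rw [hdeg, Set.ncard_coe_finset, OmFilter_eq]
  -- cardinal bookkeeping
  have h1 : (P1 (m + 4)).card = (F (m + 3)).card := card_P1 (m + 3) (by omega)
  have h2 : (P2 (m + 4)).card = (F (m + 3)).card := card_P2 (m + 3) (by omega)
  have h3 : (P3 (m + 4)).card = (G (m + 3)).card := card_P3 (m + 3) (by omega)
  have hG : (G (m + 3)).card + (F (m + 2)).card = (F (m + 3)).card := by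
    have := card_G (m + 3) (by omega)
    simpa using this
  have h12 : (P1 (m + 4) ∩ P2 (m + 4)).card = (F (m + 2)).card :=
    card_P1_inter_P2 (m + 2) (by omega)
  have h13 : (P1 (m + 4) ∩ P3 (m + 4)).card = (F (m + 2)).card :=
    card_P1_inter_P3 (m + 2) (by omega)
  have hU : (P1 (m + 4) ∪ P2 (m + 4) ∪ P3 (m + 4)).card
      + (P1 (m + 4) ∩ (P2 (m + 4) ∪ P3 (m + 4))).card
      = (P1 (m + 4)).card + (P2 (m + 4) ∪ P3 (m + 4)).card := by
    rw [union_assoc]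
    exact card_union_add_card_inter _ _
  have hU23 : (P2 (m + 4) ∪ P3 (m + 4)).card = (P2 (m + 4)).card + (P3 (m + 4)).card :=
    card_union_of_disjoint (P2_disjoint_P3 _)
  have hUint : (P1 (m + 4) ∩ (P2 (m + 4) ∪ P3 (m + 4))).card
      = (F (m + 2)).card + (F (m + 2)).card := by
    rw [inter_union_distrib_left, card_union_of_disjoint, h12, h13]
    exact Finset.disjoint_of_subset_left (inter_subset_right)
      (Finset.disjoint_of_subset_right (inter_subset_right) (P2_disjoint_P3 _))
  have hc1 : catalanC (m + 4 - 1) = (F (m + 3)).card := by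
    rw [card_F]
    show catalanC (m + 2 + 1) = catalan (m + 3 - 1)
    rw [catalanC_succ]
    congr 1
  have hc2 : catalanC (m + 4 - 2) = (F (m + 2)).card := by
    rw [card_F]
    show catalanC (m + 1 + 1) = catalan (m + 2 - 1)
    rw [catalanC_succ]
    congr 1
  rw [hc1, hc2]
  omega

end Stmt9
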